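/- arXiv:1808.05258 — 4 statements merged into one kernel-verified Lean document; each statement's English description precedes it below -/
import Mathlib

section
/- The chromatic index of the complete graph on 2ℓ+1 vertices (ℓ ≥ 1) equals 2ℓ+1. -/
open SimpleGraph

/-- Two edges (as unordered pairs) share a vertex. -/
def sharesVertex {V : Type*} (e₁ e₂ : Sym2 V) : Prop := ∃ v, v ∈ e₁ ∧ v ∈ e₂

/-- A proper edge coloring of `G` with colors in `α`: edges of `G` sharing a vertex
receive distinct colors. -/
def IsProperEdgeColoring {V α : Type*} (G : SimpleGraph V) (c : Sym2 V → α) : Prop :=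
  ∀ e₁ ∈ G.edgeSet, ∀ e₂ ∈ G.edgeSet, e₁ ≠ e₂ → sharesVertex e₁ e₂ → c e₁ ≠ c e₂

/-- The chromatic index `χ'(G)`: the least `k` admitting a proper edge coloring
with `k` colors. -/
noncomputable def chromaticIndex {V : Type*} (G : SimpleGraph V) : ℕ :=
  sInf {k | ∃ c : Sym2 V → Fin k, IsProperEdgeColoring G c}

/-- A finite set of edges of `G` forming a matching (pairwise non-adjacent edges). -/
def IsMatchingSet {V : Type*} (G : SimpleGraph V) (M : Finset (Sym2 V)) : Prop :=
  ↑M ⊆ G.edgeSet ∧ ∀ e₁ ∈ M, ∀ e₂ ∈ M, e₁ ≠ e₂ → ¬ sharesVertex e₁ e₂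

/-- The matching number `α'(G)`: maximum cardinality of a matching. -/
noncomputable def matchingNumber {V : Type*} (G : SimpleGraph V) : ℕ :=
  sSup {k | ∃ M : Finset (Sym2 V), IsMatchingSet G M ∧ M.card = k}

/-- The underlying pair of vertices of an unordered pair, as a `Finset`. -/
def sym2Fin {V : Type*} [DecidableEq V] : Sym2 V → Finset V :=
  Sym2.lift ⟨fun x y => {x, y}, fun x y => Finset.pair_comm x y⟩

lemma mem_sym2Fin {V : Type*} [DecidableEq V] (v : V) (e : Sym2 V) :
    v ∈ sym2Fin e ↔ v ∈ e := by
  induction e using Sym2.ind with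
  | _ x y => simp [sym2Fin, Sym2.mem_iff]

lemma card_sym2Fin {V : Type*} [DecidableEq V] (e : Sym2 V) (h : ¬ e.IsDiag) :
    (sym2Fin e).card = 2 := by
  induction e using Sym2.ind with
  | _ x y =>
    rw [Sym2.mk_isDiag_iff] at h
    simp [sym2Fin, Finset.card_insert_of_notMem, h]

/-- The chromatic index of the complete graph on `2ℓ+1` vertices (`ℓ ≥ 1`)
equals `2ℓ+1`. -/
theorem chromaticIndex_completeGraph_odd (ℓ : ℕ) (hℓ : 1 ≤ ℓ) :
    chromaticIndex (⊤ : SimpleGraph (Fin (2 * ℓ + 1))) = 2 * ℓ + 1 := by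
  classical
  set n := 2 * ℓ + 1 with hn
  set G := (⊤ : SimpleGraph (Fin n)) with hG
  have hnpos : 0 < n := by omega
  -- upper bound: edge {i,j} ↦ i + j in Fin n is a proper coloring
  have hmem : n ∈ {k | ∃ c : Sym2 (Fin n) → Fin k, IsProperEdgeColoring G c} := by
    refine ⟨Sym2.lift ⟨fun x y => x + y, fun x y => add_comm x y⟩, ?_⟩
    rintro e₁ h₁ e₂ h₂ hne ⟨v, hv₁, hv₂⟩
    induction e₁ using Sym2.ind with
    | _ a b =>
      induction e₂ using Sym2.ind with
      | _ cc d =>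
        simp only [Sym2.mem_iff] at hv₁ hv₂
        simp only [Sym2.lift_mk]
        rcases hv₁ with rfl | rfl <;> rcases hv₂ with rfl | rfl <;> intro hadd <;> apply hne
        · obtain rfl := add_left_cancel hadd; rfl
        · rw [add_comm cc v] at hadd
          obtain rfl := add_left_cancel hadd
          exact Sym2.eq_swap
        · rw [add_comm v d] at hadd
          obtain rfl := add_right_cancel hadd
          exact Sym2.eq_swap
        · obtain rfl := add_right_cancel hadd; rfl
  refine le_antisymm (Nat.sInf_le hmem) (le_csInf ⟨n, hmem⟩ ?_)
  -- lower bound: any proper coloring needs ≥ n colors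
  rintro k ⟨c, hc⟩
  set F : Fin k → Finset (Sym2 (Fin n)) :=
    fun a => G.edgeFinset.filter (fun e => c e = a) with hF
  have hfib : ∀ a, (F a).card ≤ ℓ := by
    intro a
    have hdisj : ∀ e₁ ∈ F a, ∀ e₂ ∈ F a, e₁ ≠ e₂ →
        Disjoint (sym2Fin e₁) (sym2Fin e₂) := by
      intro e₁ h₁ e₂ h₂ hne
      rw [hF, Finset.mem_filter, mem_edgeFinset] at h₁ h₂
      rw [Finset.disjoint_left]
      intro v hv₁ hv₂
      rw [mem_sym2Fin] at hv₁ hv₂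
      exact hc e₁ h₁.1 e₂ h₂.1 hne ⟨v, hv₁, hv₂⟩ (h₁.2.trans h₂.2.symm)
    have hcard2 : ∀ e ∈ F a, (sym2Fin e).card = 2 := by
      intro e he
      rw [hF, Finset.mem_filter, mem_edgeFinset] at he
      exact card_sym2Fin e (G.not_isDiag_of_mem_edgeSet he.1)
    have h1 : ((F a).biUnion sym2Fin).card = ∑ e ∈ F a, (sym2Fin e).card :=
      Finset.card_biUnion hdisj
    have h2 : ∑ e ∈ F a, (sym2Fin e).card = 2 * (F a).card := by
      rw [Finset.sum_congr rfl hcard2]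
      simp [mul_comm]
    have h3 : ((F a).biUnion sym2Fin).card ≤ n := by
      simpa using Finset.card_le_card ((F a).biUnion sym2Fin).subset_univ
    omega
  have htotal : G.edgeFinset.card ≤ k * ℓ := by
    have hsub : G.edgeFinset ⊆ (Finset.univ : Finset (Fin k)).biUnion F := by
      intro e he
      exact Finset.mem_biUnion.mpr ⟨c e, Finset.mem_univ _, by
        rw [hF, Finset.mem_filter]; exact ⟨he, rfl⟩⟩
    calc G.edgeFinset.card ≤ ((Finset.univ : Finset (Fin k)).biUnion F).card :=
          Finset.card_le_card hsub
      _ ≤ ∑ a : Fin k, (F a).card := Finset.card_biUnion_le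
      _ ≤ ∑ _a : Fin k, ℓ := Finset.sum_le_sum (fun a _ => hfib a)
      _ = k * ℓ := by simp [Finset.sum_const, Fintype.card_fin, mul_comm]
  have hedges : G.edgeFinset.card = ℓ * n := by
    have h := card_edgeFinset_top_eq_card_choose_two (V := Fin n)
    rw [Fintype.card_fin, Nat.choose_two_right] at h
    have hnn : n * (n - 1) = 2 * (ℓ * n) := by
      rw [hn]
      have : 2 * ℓ + 1 - 1 = 2 * ℓ := by omega
      rw [this]; ring
    rw [hnn, Nat.mul_div_cancel_left _ (by norm_num : 0 < 2)] at h
    exact h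
  rw [hedges] at htotal
  nlinarith
end

section
/- (Vizing's theorem) For any finite simple graph G, χ'(G) ≤ Δ(G) + 1. -/
open SimpleGraph

namespace VZ

variable {V : Type*} {C : Type*}

/-- properness reformulated vertex-wise. -/
def Good (G : SimpleGraph V) (c : Sym2 V → C) : Prop :=
  ∀ ⦃v a b : V⦄, G.Adj v a → G.Adj v b → a ≠ b → c s(v, a) ≠ c s(v, b)

/-- color `γ` does not appear on any edge of `G` at `v`. -/
def Free (G : SimpleGraph V) (c : Sym2 V → C) (v : V) (γ : C) : Prop :=
  ∀ ⦃w⦄, G.Adj v w → c s(v, w) ≠ γ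

lemma Good.mono {G G' : SimpleGraph V} {c : Sym2 V → C} (h : G' ≤ G) (hc : Good G c) :
    Good G' c := fun _ _ _ ha hb hne => hc (h ha) (h hb) hne

lemma Free.mono {G G' : SimpleGraph V} {c : Sym2 V → C} {v : V} {γ : C} (h : G' ≤ G)
    (hf : Free G c v γ) : Free G' c v γ := fun _ hw => hf (h hw)

lemma Good.proper {G : SimpleGraph V} {c : Sym2 V → C} (hc : Good G c) :
    IsProperEdgeColoring G c := by
  rintro e₁ h₁ e₂ h₂ hne ⟨v, hv1, hv2⟩
  obtain ⟨a, rfl⟩ := Sym2.mem_iff_exists.mp hv1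
  obtain ⟨b, rfl⟩ := Sym2.mem_iff_exists.mp hv2
  exact hc ((SimpleGraph.mem_edgeSet _).mp h₁) ((SimpleGraph.mem_edgeSet _).mp h₂)
    (fun hab => hne (by rw [hab]))

lemma Free.update_of_not_mem [DecidableEq V] {G : SimpleGraph V} {c : Sym2 V → C} {v : V}
    {γ γ' : C} {e : Sym2 V} (hv : v ∉ e) (hf : Free G c v γ) :
    Free G (Function.update c e γ') v γ := by
  intro w hw
  rw [Function.update_of_ne (fun h : s(v,w) = e => hv (h ▸ Sym2.mem_mk_left v w))]
  exact hf hw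

lemma good_addEdge [DecidableEq V] {H : SimpleGraph V} {x y₀ : V} (_hxy : H.Adj x y₀)
    {c : Sym2 V → C} (hc : Good (H.deleteEdges {s(x, y₀)}) c) {γ : C}
    (hx : Free (H.deleteEdges {s(x, y₀)}) c x γ)
    (hy : Free (H.deleteEdges {s(x, y₀)}) c y₀ γ) :
    Good H (Function.update c s(x, y₀) γ) := by
  intro v a b ha hb hab
  have hG' : ∀ {p q : V}, H.Adj p q → s(p, q) ≠ s(x, y₀) → (H.deleteEdges {s(x, y₀)}).Adj p q := by
    intro p q h hne
    rw [SimpleGraph.deleteEdges_adj]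
    exact ⟨h, by simpa using hne⟩
  have hfree : ∀ {p q : V}, v ∈ (s(x, y₀) : Sym2 V) → H.Adj v q → s(v, q) ≠ s(x, y₀) →
      c s(v, q) ≠ γ := by
    intro p q hv hq hne
    rcases Sym2.mem_iff.mp hv with rfl | rfl
    · exact hx (hG' hq hne)
    · exact hy (hG' hq hne)
  by_cases h₁ : s(v, a) = s(x, y₀) <;> by_cases h₂ : s(v, b) = s(x, y₀)
  · exact absurd (Sym2.congr_right.mp (h₁.trans h₂.symm)) hab
  · rw [h₁, Function.update_self, Function.update_of_ne h₂]
    exact fun h => hfree (p := v) (h₁ ▸ Sym2.mem_mk_left v a) hb h₂ h.symm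
  · rw [h₂, Function.update_self, Function.update_of_ne h₁]
    exact fun h => hfree (p := v) (h₂ ▸ Sym2.mem_mk_left v b) ha h₁ h
  · rw [Function.update_of_ne h₁, Function.update_of_ne h₂]
    exact hc (hG' ha h₁) (hG' hb h₂) hab

/-- A fan at `x` starting with `y₀` for the coloring `c` of `H - xy₀`. -/
def IsFan (H : SimpleGraph V) (x y₀ : V) (c : Sym2 V → C) (k : ℕ) (y : ℕ → V) : Prop :=
  (∀ i ≤ k, ∀ j ≤ k, y i = y j → i = j) ∧ y 0 = y₀ ∧ (∀ i ≤ k, H.Adj x (y i)) ∧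
  (∀ i < k, Free (H.deleteEdges {s(x, y₀)}) c (y i) (c s(x, y (i + 1))))

lemma rotate [DecidableEq V] {H : SimpleGraph V} {x y₀ : V} (hxy : H.Adj x y₀) :
    ∀ (k : ℕ) (y : ℕ → V) (c : Sym2 V → C), Good (H.deleteEdges {s(x, y₀)}) c →
    IsFan H x y₀ c k y → ∀ γ : C, Free (H.deleteEdges {s(x, y₀)}) c x γ →
    Free (H.deleteEdges {s(x, y₀)}) c (y k) γ → ∃ c' : Sym2 V → C, Good H c' := by
  intro k
  induction k with
  | zero =>
    intro y c hc hfan γ hγx hγy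
    exact ⟨_, good_addEdge hxy hc hγx (hfan.2.1 ▸ hγy)⟩
  | succ k ih =>
    intro y c hc hfan γ hγx hγy
    obtain ⟨hinj, hy0, hadj, hcond⟩ := hfan
    have hne0 : y (k + 1) ≠ y₀ := by
      intro h
      have := hinj (k + 1) le_rfl 0 (Nat.zero_le _) (h.trans hy0.symm)
      omega
    have hG'a : (H.deleteEdges {s(x, y₀)}).Adj x (y (k + 1)) := by
      rw [SimpleGraph.deleteEdges_adj]
      exact ⟨hadj _ le_rfl, by simpa using fun h => hne0 (Sym2.congr_right.mp h)⟩
    set c₁ := Function.update c s(x, y (k + 1)) γ with hc₁def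
    have hc₁ : Good (H.deleteEdges {s(x, y₀)}) c₁ :=
      good_addEdge hG'a (hc.mono (SimpleGraph.deleteEdges_le _))
        (hγx.mono (SimpleGraph.deleteEdges_le _)) (hγy.mono (SimpleGraph.deleteEdges_le _))
    have hupd_ne : ∀ e : Sym2 V, e ≠ s(x, y (k + 1)) → c₁ e = c e := fun e he =>
      Function.update_of_ne he _ _
    have hyne : ∀ i ≤ k, y i ≠ y (k + 1) := by
      intro i hi h
      have := hinj i (by omega) (k + 1) le_rfl h
      omega
    have hyx : ∀ i ≤ k + 1, y i ≠ x := fun i hi => (hadj i hi).ne'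
    have hnotmem : ∀ i ≤ k, y i ∉ (s(x, y (k + 1)) : Sym2 V) := by
      intro i hi h
      rcases Sym2.mem_iff.mp h with h | h
      · exact hyx i (by omega) h
      · exact hyne i hi h
    have hfan₁ : IsFan H x y₀ c₁ k y := by
      refine ⟨fun i hi j hj h => hinj i (by omega) j (by omega) h, hy0,
        fun i hi => hadj i (by omega), ?_⟩
      intro i hik
      rw [hupd_ne _ (fun h => hyne (i + 1) hik (Sym2.congr_right.mp h))]
      exact Free.update_of_not_mem (hnotmem i (by omega)) (hcond i (by omega))
    have hβ'x : Free (H.deleteEdges {s(x, y₀)}) c₁ x (c s(x, y (k + 1))) := by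
      intro w hw
      by_cases hww : w = y (k + 1)
      · subst hww
        rw [hc₁def, Function.update_self]
        exact fun h => hγx hG'a h.symm
      · rw [hupd_ne _ (fun h => hww (Sym2.congr_right.mp h))]
        exact hc hw hG'a hww
    have hβ'y : Free (H.deleteEdges {s(x, y₀)}) c₁ (y k) (c s(x, y (k + 1))) :=
      Free.update_of_not_mem (hnotmem k le_rfl) (hcond k (by omega))
    exact ih y c₁ hc₁ hfan₁ _ hβ'x hβ'y


lemma exists_free [Fintype V] {D : ℕ} (G : SimpleGraph V) (c : Sym2 V → Fin (D + 1))
    (hc : Good G c) (v : V) (hdeg : (G.neighborSet v).ncard ≤ D) : ∃ γ, Free G c v γ := by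
  classical
  set N := (G.neighborSet v).toFinset with hNdef
  have hN : N.card ≤ D := by
    rw [hNdef, ← Set.ncard_eq_toFinset_card']; exact hdeg
  set im := N.image (fun w => c s(v, w)) with himdef
  have him : im.card ≤ D := le_trans (Finset.card_image_le) hN
  have : ∃ γ, γ ∉ im := by
    by_contra h
    push_neg at h
    have h2 := Finset.card_le_card (fun γ _ => h γ : (Finset.univ : Finset (Fin (D + 1))) ⊆ im)
    rw [Finset.card_univ, Fintype.card_fin] at h2
    omega
  obtain ⟨γ, hγ⟩ := this
  refine ⟨γ, fun w hw h => hγ (Finset.mem_image.mpr ⟨w, ?_, h⟩)⟩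
  rw [hNdef, Set.mem_toFinset]
  exact hw

/-- The subgraph of `G` consisting of edges colored `a₀` or `b₀`. -/
def kGraph (G : SimpleGraph V) (c : Sym2 V → C) (a₀ b₀ : C) : SimpleGraph V where
  Adj u w := G.Adj u w ∧ (c s(u, w) = a₀ ∨ c s(u, w) = b₀)
  symm := ⟨fun u w ⟨h1, h2⟩ => ⟨h1.symm, by rwa [Sym2.eq_swap]⟩⟩
  loopless := ⟨fun u h => G.loopless.irrefl u h.1⟩

def kSwap [DecidableEq C] (a₀ b₀ γ : C) : C := if γ = a₀ then b₀ else if γ = b₀ then a₀ else γ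

open scoped Classical in
noncomputable def kFlip (G : SimpleGraph V) [DecidableEq C] (c : Sym2 V → C) (a₀ b₀ : C)
    (S : Set V) : Sym2 V → C :=
  fun e => if e ∈ (kGraph G c a₀ b₀).edgeSet ∧ ∃ v ∈ e, v ∈ S then kSwap a₀ b₀ (c e) else c e

section Kempe
variable [DecidableEq C] {G : SimpleGraph V} {c : Sym2 V → C} {a₀ b₀ : C} {S : Set V}

lemma kSwap_a : kSwap a₀ b₀ a₀ = b₀ := if_pos rfl
lemma kSwap_b (hab : a₀ ≠ b₀) : kSwap a₀ b₀ b₀ = a₀ := by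
  rw [kSwap, if_neg (Ne.symm hab), if_pos rfl]
lemma kSwap_ne {γ : C} (h1 : γ ≠ a₀) (h2 : γ ≠ b₀) : kSwap a₀ b₀ γ = γ := by
  rw [kSwap, if_neg h1, if_neg h2]
lemma kSwap_inj (hab : a₀ ≠ b₀) : Function.Injective (kSwap a₀ b₀) := by
  intro γ δ h
  unfold kSwap at h
  split_ifs at h <;> simp_all

lemma kFlip_eq_swap {u w : V} (h : G.Adj u w) (hcol : c s(u, w) = a₀ ∨ c s(u, w) = b₀)
    (hu : u ∈ S) : kFlip G c a₀ b₀ S s(u, w) = kSwap a₀ b₀ (c s(u, w)) := by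
  rw [kFlip]
  exact if_pos ⟨(SimpleGraph.mem_edgeSet _).mpr ⟨h, hcol⟩, ⟨u, Sym2.mem_mk_left _ _, hu⟩⟩

lemma kFlip_eq_self (hS : ∀ ⦃p q : V⦄, (kGraph G c a₀ b₀).Adj p q → p ∈ S → q ∈ S) {u w : V}
    (h : ¬(G.Adj u w ∧ (c s(u, w) = a₀ ∨ c s(u, w) = b₀) ∧ u ∈ S)) :
    kFlip G c a₀ b₀ S s(u, w) = c s(u, w) := by
  rw [kFlip]
  rw [if_neg]
  rintro ⟨hmem, v, hv, hvS⟩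
  have hadj : (kGraph G c a₀ b₀).Adj u w := (SimpleGraph.mem_edgeSet _).mp hmem
  have huS : u ∈ S := by
    rcases Sym2.mem_iff.mp hv with rfl | rfl
    · exact hvS
    · exact hS hadj.symm hvS
  exact h ⟨hadj.1, hadj.2, huS⟩

variable (hab : a₀ ≠ b₀) (hS : ∀ ⦃p q : V⦄, (kGraph G c a₀ b₀).Adj p q → p ∈ S → q ∈ S)
include hS

lemma kempe_good (hab : a₀ ≠ b₀) (hc : Good G c) : Good G (kFlip G c a₀ b₀ S) := by
  intro v a b ha hb hneq
  have hone := hc ha hb hneq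
  by_cases hvS : v ∈ S
  · by_cases h1 : c s(v, a) = a₀ ∨ c s(v, a) = b₀ <;>
      by_cases h2 : c s(v, b) = a₀ ∨ c s(v, b) = b₀
    · rw [kFlip_eq_swap ha h1 hvS, kFlip_eq_swap hb h2 hvS]
      exact fun h => hone (kSwap_inj hab h)
    · rw [kFlip_eq_swap ha h1 hvS, kFlip_eq_self hS (by tauto)]
      rcases h1 with h1 | h1 <;> rw [h1]
      · rw [kSwap_a]; tauto
      · rw [kSwap_b hab]; tauto
    · rw [kFlip_eq_self hS (by tauto), kFlip_eq_swap hb h2 hvS]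
      rcases h2 with h2 | h2 <;> rw [h2]
      · rw [kSwap_a]; tauto
      · rw [kSwap_b hab]; tauto
    · rw [kFlip_eq_self hS (by tauto), kFlip_eq_self hS (by tauto)]; exact hone
  · rw [kFlip_eq_self hS (by tauto), kFlip_eq_self hS (by tauto)]; exact hone

lemma free_kFlip_of_not_mem {v : V} {γ : C} (hv : v ∉ S) (hf : Free G c v γ) :
    Free G (kFlip G c a₀ b₀ S) v γ := by
  intro w hw
  rw [kFlip_eq_self hS (by tauto)]
  exact hf hw

lemma free_kFlip_of_ne (hab : a₀ ≠ b₀) {v : V} {γ : C} (h1 : γ ≠ a₀) (h2 : γ ≠ b₀)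
    (hf : Free G c v γ) : Free G (kFlip G c a₀ b₀ S) v γ := by
  intro w hw
  by_cases hcol : c s(v, w) = a₀ ∨ c s(v, w) = b₀
  · by_cases hvS : v ∈ S
    · rw [kFlip_eq_swap hw hcol hvS]
      rcases hcol with h | h <;> rw [h]
      · rw [kSwap_a]; exact fun hh => h2 hh.symm
      · rw [kSwap_b hab]; exact fun hh => h1 hh.symm
    · rw [kFlip_eq_self hS (by tauto)]; exact hf hw
  · rw [kFlip_eq_self hS (by tauto)]; exact hf hw

lemma free_kFlip_swap₁ (hab : a₀ ≠ b₀) {v : V} (hv : v ∈ S) (hf : Free G c v b₀) :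
    Free G (kFlip G c a₀ b₀ S) v a₀ := by
  intro w hw
  by_cases h1 : c s(v, w) = a₀
  · rw [kFlip_eq_swap hw (Or.inl h1) hv, h1, kSwap_a]
    exact Ne.symm hab
  · by_cases h2 : c s(v, w) = b₀
    · exact absurd h2 (hf hw)
    · rw [kFlip_eq_self hS (by tauto)]; exact h1

lemma free_kFlip_swap₂ (hab : a₀ ≠ b₀) {v : V} (hv : v ∈ S) (hf : Free G c v a₀) :
    Free G (kFlip G c a₀ b₀ S) v b₀ := by
  intro w hw
  by_cases h2 : c s(v, w) = b₀
  · rw [kFlip_eq_swap hw (Or.inr h2) hv, h2, kSwap_b hab]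
    exact hab
  · by_cases h1 : c s(v, w) = a₀
    · exact absurd h1 (hf hw)
    · rw [kFlip_eq_self hS (by tauto)]; exact h2

lemma free_kFlip_both {v : V} (hfa : Free G c v a₀) (hfb : Free G c v b₀) :
    Free G (kFlip G c a₀ b₀ S) v b₀ := by
  intro w hw
  rw [kFlip_eq_self hS (by rintro ⟨_, h | h, _⟩; exacts [hfa hw h, hfb hw h])]
  exact hfb hw

end Kempe

/-- Bound on degrees in the two-colored subgraph via available colors. -/
lemma kdeg_le [Fintype V] {G : SimpleGraph V} {c : Sym2 V → C} {a₀ b₀ : C} (hc : Good G c)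
    (v : V) (T : Finset C) (hT : ∀ ⦃w⦄, (kGraph G c a₀ b₀).Adj v w → c s(v, w) ∈ T) :
    ((kGraph G c a₀ b₀).neighborSet v).ncard ≤ T.card := by
  classical
  rw [Set.ncard_eq_toFinset_card']
  apply Finset.card_le_card_of_injOn (fun w => c s(v, w))
  · intro w hw
    rw [Finset.mem_coe, Set.mem_toFinset] at hw
    exact hT hw
  · intro w₁ hw₁ w₂ hw₂ h
    simp only [Finset.mem_coe, Set.mem_toFinset] at hw₁ hw₂
    by_contra hne
    exact hc hw₁.1 hw₂.1 hne h

/-- In a graph with max degree ≤ 2 where `x` has degree ≤ 1, the connected component of `x`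
is a path, so it has at most one further vertex of degree ≤ 1. -/
lemma atMostOne [Fintype V] [DecidableEq V] {K : SimpleGraph V} {x u v : V}
    (hdeg2 : ∀ w, (K.neighborSet w).ncard ≤ 2)
    (hx : (K.neighborSet x).ncard ≤ 1)
    (hu : (K.neighborSet u).ncard ≤ 1) (hv : (K.neighborSet v).ncard ≤ 1)
    (hru : K.Reachable x u) (hrv : K.Reachable x v) (hux : u ≠ x) (hvx : v ≠ x) : u = v := by
  classical
  by_contra huv
  -- the component of x, as a graph
  set K' : SimpleGraph V :=
    { Adj := fun a b => K.Adj a b ∧ K.Reachable x a ∧ K.Reachable x b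
      symm := ⟨fun a b ⟨h1, h2, h3⟩ => ⟨h1.symm, h3, h2⟩⟩
      loopless := ⟨fun a h => K.loopless.irrefl a h.1⟩ } with hK'def
  haveI : DecidableRel K'.Adj := Classical.decRel _
  set Sf : Finset V := Finset.univ.filter (fun w => K.Reachable x w) with hSfdef
  have hmemSf : ∀ w : V, w ∈ Sf ↔ K.Reachable x w := by
    intro w; simp [hSfdef]
  -- handshake
  have hhs : ∑ w, K'.degree w = 2 * K'.edgeFinset.card :=
    SimpleGraph.sum_degrees_eq_twice_card_edges K'
  have hzero : ∀ w ∉ Sf, K'.degree w = 0 := by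
    intro w hw
    rw [← SimpleGraph.card_neighborFinset_eq_degree, Finset.card_eq_zero]
    ext z
    simp only [SimpleGraph.mem_neighborFinset, Finset.notMem_empty, iff_false]
    intro hz
    exact hw ((hmemSf w).mpr hz.2.1)
  have hsum : ∑ w, K'.degree w = ∑ w ∈ Sf, K'.degree w :=
    (Finset.sum_subset (Finset.subset_univ _) (fun w _ hw => hzero w hw)).symm
  have hdle : ∀ w, K'.degree w ≤ (K.neighborSet w).ncard := by
    intro w
    rw [← SimpleGraph.card_neighborFinset_eq_degree, Set.ncard_eq_toFinset_card']
    apply Finset.card_le_card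
    intro z hz
    rw [SimpleGraph.mem_neighborFinset] at hz
    rw [Set.mem_toFinset]
    exact hz.1
  -- a step towards x decreasing distance
  have hstep : ∀ w : V, ∃ z : V, w ≠ x → K.Reachable x w →
      (K.Adj w z ∧ K.dist z x < K.dist w x) := by
    intro w
    by_cases hcase : w ≠ x ∧ K.Reachable x w
    · obtain ⟨p, hp⟩ := (hcase.2.symm : K.Reachable w x).exists_walk_length_eq_dist
      cases p with
      | nil => exact absurd rfl hcase.1
      | @cons _ z _ h q =>
        refine ⟨z, fun _ _ => ⟨h, lt_of_le_of_lt (SimpleGraph.dist_le q) ?_⟩⟩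
        rw [← hp, SimpleGraph.Walk.length_cons]
        omega
    · exact ⟨w, by tauto⟩
  choose z hz using hstep
  -- injection from Sf.erase x into edges of K'
  have hcard : (Sf.erase x).card ≤ K'.edgeFinset.card := by
    apply Finset.card_le_card_of_injOn (fun w => s(w, z w))
    · intro w hw
      rw [Finset.mem_coe, Finset.mem_erase] at hw
      obtain ⟨hw2, hw1⟩ := hw
      have hr := (hmemSf w).mp hw1
      obtain ⟨hadj, _⟩ := hz w hw2 hr
      rw [Finset.mem_coe, SimpleGraph.mem_edgeFinset]
      exact (SimpleGraph.mem_edgeSet _).mpr ⟨hadj, hr, hr.trans ⟨SimpleGraph.Walk.cons hadj SimpleGraph.Walk.nil⟩⟩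
    · intro w₁ hw₁ w₂ hw₂ h
      rw [Finset.mem_coe, Finset.mem_erase] at hw₁ hw₂
      by_contra hne
      rcases Sym2.eq_iff.mp h with ⟨h1, h2⟩ | ⟨h1, h2⟩
      · exact hne h1
      · have d1 := (hz w₁ hw₁.1 ((hmemSf w₁).mp hw₁.2)).2
        have d2 := (hz w₂ hw₂.1 ((hmemSf w₂).mp hw₂.2)).2
        rw [← h1] at d2
        rw [h2] at d1
        omega
  -- sum splitting
  have hxSf : x ∈ Sf := (hmemSf x).mpr (SimpleGraph.Reachable.refl x)
  have huSf : u ∈ Sf := (hmemSf u).mpr hru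
  have hvSf : v ∈ Sf := (hmemSf v).mpr hrv
  set s3 : Finset V := {x, u, v} with hs3def
  have hs3sub : s3 ⊆ Sf := by
    intro w hw
    simp only [hs3def, Finset.mem_insert, Finset.mem_singleton] at hw
    rcases hw with rfl | rfl | rfl <;> assumption
  have hs3card : s3.card = 3 := by
    rw [hs3def, Finset.card_insert_of_notMem (by simp [hux.symm, hvx.symm]),
      Finset.card_insert_of_notMem (by simp [huv]), Finset.card_singleton]
  have hsplit : ∑ w ∈ Sf \ s3, K'.degree w + ∑ w ∈ s3, K'.degree w = ∑ w ∈ Sf, K'.degree w :=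
    Finset.sum_sdiff hs3sub
  have hsum3 : ∑ w ∈ s3, K'.degree w = K'.degree x + K'.degree u + K'.degree v := by
    rw [hs3def, Finset.sum_insert (by simp [hux.symm, hvx.symm]),
      Finset.sum_insert (by simp [huv]), Finset.sum_singleton]
    ring
  have hT : ∑ w ∈ Sf \ s3, K'.degree w ≤ 2 * (Sf \ s3).card := by
    rw [mul_comm]
    apply Finset.sum_le_card_nsmul
    intro w _
    exact le_trans (hdle w) (hdeg2 w)
  have hdx : K'.degree x ≤ 1 := le_trans (hdle x) hx
  have hdu : K'.degree u ≤ 1 := le_trans (hdle u) hu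
  have hdv : K'.degree v ≤ 1 := le_trans (hdle v) hv
  have hcards : (Sf \ s3).card + s3.card = Sf.card := Finset.card_sdiff_add_card_eq_card hs3sub
  have hec : (Sf.erase x).card + 1 = Sf.card := Finset.card_erase_add_one hxSf
  omega

/-- The key extension step of Vizing's theorem: a proper coloring of `H - xy₀` with `D+1`
colors extends to one of `H`, via fan rotation and a Kempe chain flip. -/
lemma extend [Fintype V] [DecidableEq V] {D : ℕ} {H : SimpleGraph V}
    (hdeg : ∀ v, (H.neighborSet v).ncard ≤ D) {x y₀ : V} (hxy : H.Adj x y₀)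
    {c : Sym2 V → Fin (D + 1)} (hc : Good (H.deleteEdges {s(x, y₀)}) c) :
    ∃ c' : Sym2 V → Fin (D + 1), Good H c' := by
  classical
  set G' := H.deleteEdges {s(x, y₀)} with hG'def
  have hG'le : G' ≤ H := SimpleGraph.deleteEdges_le _
  have hG'deg : ∀ v, (G'.neighborSet v).ncard ≤ D := fun v =>
    le_trans (Set.ncard_le_ncard (fun w hw => hG'le hw) (Set.toFinite _)) (hdeg v)
  have hfree : ∀ v, ∃ γ, Free G' c v γ := fun v => exists_free G' c hc v (hG'deg v)
  -- a maximal fan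
  set FS : Set ℕ := {k | ∃ y : ℕ → V, IsFan H x y₀ c k y} with hFSdef
  have hFS0 : 0 ∈ FS :=
    ⟨fun _ => y₀, fun i hi j hj _ => by omega, rfl, fun i _ => hxy,
      fun i hi => absurd hi (Nat.not_lt_zero i)⟩
  have hFSbdd : BddAbove FS := by
    refine ⟨Fintype.card V, fun k hk => ?_⟩
    obtain ⟨y, hinj, -, -, -⟩ := hk
    have hi : Function.Injective (fun i : Fin (k + 1) => y i) := fun i j h =>
      Fin.ext (hinj i (Nat.lt_succ_iff.mp i.isLt) j (Nat.lt_succ_iff.mp j.isLt) h)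
    have h2 := Fintype.card_le_of_injective _ hi
    rw [Fintype.card_fin] at h2
    omega
  set k := sSup FS with hkdef
  have hkmem : k ∈ FS := Nat.sSup_mem ⟨0, hFS0⟩ hFSbdd
  obtain ⟨y, hinj, hy0, hadj, hcond⟩ := hkmem
  have hmax : ∀ k' ∈ FS, k' ≤ k := fun k' h => le_csSup hFSbdd h
  obtain ⟨α, hα⟩ := hfree x
  obtain ⟨β, hβ⟩ := hfree (y k)
  by_cases hβx : Free G' c x β
  · exact rotate hxy k y c hc ⟨hinj, hy0, hadj, hcond⟩ β hβx hβ
  -- β appears at x, say on the edge x-w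
  have hwex : ∃ w, G'.Adj x w ∧ c s(x, w) = β := by
    by_contra h
    push_neg at h
    exact hβx (fun w hw => h w hw)
  obtain ⟨w, hwadj, hwc⟩ := hwex
  -- w is on the fan
  have hwfan : ∃ j, j ≤ k ∧ j ≠ 0 ∧ w = y j := by
    by_contra hno
    push_neg at hno
    have hwny : ∀ i ≤ k, w ≠ y i := by
      intro i hi h
      rcases Nat.eq_zero_or_pos i with rfl | hpos
      · rw [h, hy0, hG'def, SimpleGraph.deleteEdges_adj] at hwadj
        exact hwadj.2 rfl
      · exact (hno i hi (by omega)) h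
    set y' : ℕ → V := fun i => if i = k + 1 then w else y i with hy'def
    have hy'le : ∀ i, i ≤ k → y' i = y i := fun i hi => if_neg (by omega)
    have hy'top : y' (k + 1) = w := if_pos rfl
    have hmem : (k + 1) ∈ FS := by
      refine ⟨y', ?_, ?_, ?_, ?_⟩
      · intro i hi i' hi' h
        by_cases h1 : i = k + 1 <;> by_cases h2 : i' = k + 1
        · omega
        · subst h1
          rw [hy'top, hy'le i' (by omega)] at h
          exact absurd h (hwny i' (by omega))
        · subst h2
          rw [hy'top, hy'le i (by omega)] at h
          exact absurd h.symm (hwny i (by omega))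
        · rw [hy'le i (by omega), hy'le i' (by omega)] at h
          exact hinj i (by omega) i' (by omega) h
      · rw [hy'le 0 (by omega)]; exact hy0
      · intro i hi
        by_cases h1 : i = k + 1
        · subst h1
          rw [hy'top]
          exact hG'le hwadj
        · rw [hy'le i (by omega)]
          exact hadj i (by omega)
      · intro i hi
        by_cases h1 : i = k
        · subst h1
          rw [hy'le k le_rfl, hy'top, hwc]
          exact hβ
        · rw [hy'le i (by omega), hy'le (i + 1) (by omega)]
          exact hcond i (by omega)
    have := hmax _ hmem
    omega
  obtain ⟨j, hjk, hj0, rfl⟩ := hwfan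
  have hjklt : j < k := by
    rcases Nat.lt_or_ge j k with h | h
    · exact h
    · exfalso
      have hjk' : j = k := by omega
      subst hjk'
      exact hβ hwadj.symm (by rw [Sym2.eq_swap]; exact hwc)
  have hαβ : α ≠ β := fun h => hα hwadj (hwc.trans h.symm)
  -- Kempe chain flip on the component of x in the α/β-subgraph
  set S : Set V := {v | (kGraph G' c α β).Reachable x v} with hSdef
  have hxS : x ∈ S := SimpleGraph.Reachable.refl x
  have hS : ∀ ⦃p q : V⦄, (kGraph G' c α β).Adj p q → p ∈ S → q ∈ S := fun p q hpq hp =>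
    hp.trans ⟨SimpleGraph.Walk.cons hpq SimpleGraph.Walk.nil⟩
  set c₂ := kFlip G' c α β S with hc₂def
  have hc₂ : Good G' c₂ := kempe_good hS hαβ hc
  have hfree2x : Free G' c₂ x β := free_kFlip_swap₂ hS hαβ hxS hα
  have hj1 : j - 1 + 1 = j := by omega
  have hfreej : Free G' c (y (j - 1)) β := by
    have h := hcond (j - 1) (by omega)
    rw [hj1, hwc] at h
    exact h
  have hG'adj : ∀ i, i ≤ k → i ≠ 0 → G'.Adj x (y i) := by
    intro i hi hi0
    rw [hG'def, SimpleGraph.deleteEdges_adj]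
    refine ⟨hadj i hi, ?_⟩
    intro hmem
    rw [Set.mem_singleton_iff] at hmem
    have h1 : y i = y₀ := Sym2.congr_right.mp hmem
    have := hinj i hi 0 (by omega) (h1.trans hy0.symm)
    omega
  have hcolne : ∀ i, i ≤ k → i ≠ 0 → i ≠ j → c s(x, y i) ≠ α ∧ c s(x, y i) ≠ β := by
    intro i hi hi0 hij
    refine ⟨hα (hG'adj i hi hi0), fun h => ?_⟩
    exact hc (hG'adj i hi hi0) hwadj (fun hh => hij (hinj i hi j (by omega) hh))
      (h.trans hwc.symm)
  have hstep2 : ∀ i, i < k → i + 1 ≠ j → Free G' c₂ (y i) (c₂ s(x, y (i + 1))) := by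
    intro i hik hij
    obtain ⟨hne1, hne2⟩ := hcolne (i + 1) (by omega) (by omega) hij
    rw [hc₂def, kFlip_eq_self hS (by tauto)]
    exact free_kFlip_of_ne hS hαβ hne1 hne2 (hcond i hik)
  by_cases hcaseB : y (j - 1) ∈ S ∧ ¬Free G' c (y (j - 1)) α
  · -- Case B: the flip frees α at y (j-1); rotate the full fan with β
    have hfreeBj : Free G' c₂ (y (j - 1)) α := free_kFlip_swap₁ hS hαβ hcaseB.1 hfreej
    have hdeg2K : ∀ v, ((kGraph G' c α β).neighborSet v).ncard ≤ 2 := by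
      intro v
      have h := kdeg_le (a₀ := α) (b₀ := β) hc v {α, β}
        (fun z hz => by rcases hz.2 with h | h <;> simp [h])
      exact le_trans h (le_trans (Finset.card_insert_le _ _) (by simp))
    have hdegxK : ((kGraph G' c α β).neighborSet x).ncard ≤ 1 := by
      have h := kdeg_le (a₀ := α) (b₀ := β) hc x {β} (fun z hz => by
        rcases hz.2 with h | h
        · exact absurd h (hα hz.1)
        · simp [h])
      simpa using h
    have hdegjK : ((kGraph G' c α β).neighborSet (y (j - 1))).ncard ≤ 1 := by
      have h := kdeg_le (a₀ := α) (b₀ := β) hc (y (j - 1)) {α} (fun z hz => by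
        rcases hz.2 with h | h
        · simp [h]
        · exact absurd h (hfreej hz.1))
      simpa using h
    have hdegkK : ((kGraph G' c α β).neighborSet (y k)).ncard ≤ 1 := by
      have h := kdeg_le (a₀ := α) (b₀ := β) hc (y k) {α} (fun z hz => by
        rcases hz.2 with h | h
        · simp [h]
        · exact absurd h (hβ hz.1))
      simpa using h
    have hykS : y k ∉ S := by
      intro hykS'
      have heq := atMostOne hdeg2K hdegxK hdegjK hdegkK hcaseB.1 hykS'
        ((hadj (j - 1) (by omega)).ne') ((hadj k le_rfl).ne')
      have := hinj (j - 1) (by omega) k le_rfl heq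
      omega
    have hfanB : IsFan H x y₀ c₂ k y := by
      refine ⟨hinj, hy0, hadj, ?_⟩
      intro i hik
      by_cases hij : i + 1 = j
      · have hieq : i = j - 1 := by omega
        subst hieq
        rw [hij, hc₂def, kFlip_eq_swap hwadj (Or.inr hwc) hxS, hwc, kSwap_b hαβ]
        exact hfreeBj
      · exact hstep2 i hik hij
    have hfree2yk : Free G' c₂ (y k) β := free_kFlip_of_not_mem hS hykS hβ
    exact rotate hxy k y c₂ hc₂ hfanB β hfree2x hfree2yk
  · -- Case A: β is still free at y (j-1) after the flip; rotate the prefix fan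
    push_neg at hcaseB
    have hfreeAj : Free G' c₂ (y (j - 1)) β := by
      by_cases hmem : y (j - 1) ∈ S
      · exact free_kFlip_both hS (hcaseB hmem) hfreej
      · exact free_kFlip_of_not_mem hS hmem hfreej
    have hfanA : IsFan H x y₀ c₂ (j - 1) y := by
      refine ⟨fun i hi i' hi' h => hinj i (by omega) i' (by omega) h, hy0,
        fun i hi => hadj i (by omega), ?_⟩
      intro i hik
      exact hstep2 i (by omega) (by omega)
    exact rotate hxy (j - 1) y c₂ hc₂ hfanA β hfree2x hfreeAj

lemma good_of_no_edges {D : ℕ} {H : SimpleGraph V} (h : H.edgeSet = ∅) :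
    Good H (fun _ => (0 : Fin (D + 1))) := by
  intro v a b ha _ _
  exfalso
  have hmem : s(v, a) ∈ H.edgeSet := (SimpleGraph.mem_edgeSet _).mpr ha
  rw [h] at hmem
  exact hmem

lemma vizing_aux [Fintype V] [DecidableEq V] {D : ℕ} :
    ∀ (n : ℕ) (H : SimpleGraph V), (∀ v, (H.neighborSet v).ncard ≤ D) →
    H.edgeSet.ncard ≤ n → ∃ c : Sym2 V → Fin (D + 1), Good H c := by
  intro n
  induction n with
  | zero =>
    intro H hdeg hcard
    refine ⟨fun _ => 0, good_of_no_edges ?_⟩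
    rw [← Set.ncard_eq_zero (H.edgeSet.toFinite)]
    omega
  | succ n ih =>
    intro H hdeg hcard
    by_cases hemp : H.edgeSet = ∅
    · exact ⟨fun _ => 0, good_of_no_edges hemp⟩
    · obtain ⟨e, he⟩ := Set.nonempty_iff_ne_empty.mpr hemp
      induction e using Sym2.ind with
      | _ x y₀ =>
        have hxy : H.Adj x y₀ := (SimpleGraph.mem_edgeSet _).mp he
        set G' := H.deleteEdges {s(x, y₀)} with hG'def
        have hdeg' : ∀ v, (G'.neighborSet v).ncard ≤ D := fun v =>
          le_trans (Set.ncard_le_ncard (fun w hw => SimpleGraph.deleteEdges_le _ hw)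
            (Set.toFinite _)) (hdeg v)
        have hcard' : G'.edgeSet.ncard ≤ n := by
          rw [hG'def, SimpleGraph.edgeSet_deleteEdges]
          have h1 : (H.edgeSet \ {s(x, y₀)}).ncard = H.edgeSet.ncard - 1 :=
            Set.ncard_diff_singleton_of_mem he
          have h2 : 0 < H.edgeSet.ncard :=
            (Set.ncard_pos (H.edgeSet.toFinite)).mpr ⟨_, he⟩
          omega
        obtain ⟨c, hc⟩ := ih G' hdeg' hcard'
        exact extend hdeg hxy hc

end VZ

/-- Vizing's theorem: for any finite simple graph `G`, `χ'(G) ≤ Δ(G) + 1`. -/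
theorem chromaticIndex_le_maxDegree_add_one {V : Type*} [Fintype V] (G : SimpleGraph V)
    [DecidableRel G.Adj] : chromaticIndex G ≤ G.maxDegree + 1 := by
  classical
  have hdeg : ∀ v, (G.neighborSet v).ncard ≤ G.maxDegree := by
    intro v
    rw [← Nat.card_coe_set_eq, Nat.card_eq_fintype_card,
      SimpleGraph.card_neighborSet_eq_degree]
    exact G.degree_le_maxDegree v
  obtain ⟨c, hc⟩ := VZ.vizing_aux (D := G.maxDegree) G.edgeSet.ncard G hdeg le_rfl
  exact Nat.sInf_le ⟨c, hc.proper⟩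
end

section
/- Every triangle-free simple graph on 7 vertices in which at least three vertices have degree 4 contains no 5-cycle. -/
open SimpleGraph

/-- Parity lemma: if `f` is a proper 2-coloring, endpoints of a walk agree in
color iff the walk has even length. -/
lemma walk_parity {V : Type*} {G : SimpleGraph V} (f : V → Bool)
    (hf : ∀ ⦃x y⦄, G.Adj x y → f x ≠ f y) :
    ∀ {u v : V} (w : G.Walk u v), (f u = f v ↔ Even w.length) := by
  intro u v w
  induction w with
  | nil => simp
  | @cons u x v h p ih =>
    simp only [SimpleGraph.Walk.length_cons, Nat.even_add_one, ← ih]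
    have := hf h
    constructor
    · intro h1 h2; exact this (h1.trans h2.symm)
    · intro h1
      rcases Bool.eq_false_or_eq_true (f x) with hx | hx <;>
        rcases Bool.eq_false_or_eq_true (f v) with hv | hv <;>
        rcases Bool.eq_false_or_eq_true (f u) with hu | hu <;>
        simp_all

/-- A triangle-free simple graph on 7 vertices with at least three vertices of
degree 4 contains no 5-cycle. -/
theorem no_five_cycle (G : SimpleGraph (Fin 7)) [DecidableRel G.Adj]
    (htf : G.CliqueFree 3)
    (hdeg : 3 ≤ (Finset.univ.filter fun v => G.degree v = 4).card) :
    ¬ ∃ (v : Fin 7) (w : G.Walk v v), w.IsCycle ∧ w.length = 5 := by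
  -- triangle-freeness, in convenient form
  have htri : ∀ x y z : Fin 7, G.Adj x y → G.Adj x z → G.Adj y z → False := by
    intro x y z h1 h2 h3
    exact htf {x, y, z} (is3Clique_triple_iff.mpr ⟨h1, h2, h3⟩)
  -- extract three distinct degree-4 vertices
  obtain ⟨T, hT, hTcard⟩ :=
    Finset.exists_subset_card_eq (s := Finset.univ.filter fun v => G.degree v = 4)
      (n := 3) hdeg
  obtain ⟨a, b, c, hab, hac, hbc, rfl⟩ := Finset.card_eq_three.mp hTcard
  have hda : G.degree a = 4 := by
    have := hT (by simp : a ∈ ({a,b,c} : Finset (Fin 7))); simpa using this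
  have hdb : G.degree b = 4 := by
    have := hT (by simp : b ∈ ({a,b,c} : Finset (Fin 7))); simpa using this
  have hdc : G.degree c = 4 := by
    have := hT (by simp : c ∈ ({a,b,c} : Finset (Fin 7))); simpa using this
  -- two degree-4 vertices cannot be adjacent
  have hnonadj : ∀ x y : Fin 7, G.degree x = 4 → G.degree y = 4 → ¬ G.Adj x y := by
    intro x y hx hy hadj
    have hdisj : Disjoint (G.neighborFinset x) (G.neighborFinset y) := by
      rw [Finset.disjoint_left]
      intro z hzx hzy
      rw [SimpleGraph.mem_neighborFinset] at hzx hzy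
      exact htri x y z hadj hzx hzy
    have h8 : (G.neighborFinset x ∪ G.neighborFinset y).card = 8 := by
      rw [Finset.card_union_of_disjoint hdisj]
      simp [← SimpleGraph.card_neighborFinset_eq_degree] at hx hy ⊢
      omega
    have := Finset.card_le_univ (G.neighborFinset x ∪ G.neighborFinset y)
    simp [h8] at this
  have hnab : ¬ G.Adj a b := hnonadj a b hda hdb
  have hnac : ¬ G.Adj a c := hnonadj a c hda hdc
  have hnbc : ¬ G.Adj b c := hnonadj b c hdb hdc
  -- each of a, b, c is adjacent to every vertex outside {a, b, c}
  have hfull : ∀ x : Fin 7, G.degree x = 4 → ¬ G.Adj x a → ¬ G.Adj x b → ¬ G.Adj x c →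
      G.neighborFinset x = Finset.univ \ {a, b, c} := by
    intro x hx hxa hxb hxc
    apply Finset.eq_of_subset_of_card_le
    · intro z hz
      rw [SimpleGraph.mem_neighborFinset] at hz
      simp only [Finset.mem_sdiff, Finset.mem_univ, true_and, Finset.mem_insert,
        Finset.mem_singleton]
      push_neg
      refine ⟨?_, ?_, ?_⟩ <;> rintro rfl
      · exact hxa hz
      · exact hxb hz
      · exact hxc hz
    · have h1 : (G.neighborFinset x).card = 4 := by
        rw [SimpleGraph.card_neighborFinset_eq_degree]; exact hx
      have h2 : (Finset.univ \ ({a, b, c} : Finset (Fin 7))).card = 4 := by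
        rw [Finset.card_sdiff_of_subset (Finset.subset_univ _)]
        rw [Finset.card_insert_of_notMem (by simp [hab, hac]),
          Finset.card_insert_of_notMem (by simp [hbc]), Finset.card_singleton]
        simp
      omega
  have hNa := hfull a hda (fun h => G.loopless.irrefl a h) (fun h => hnab h) (fun h => hnac h)
  have hNb := hfull b hdb (fun h => hnab h.symm) (fun h => G.loopless.irrefl b h) (fun h => hnbc h)
  have hNc := hfull c hdc (fun h => hnac h.symm) (fun h => hnbc h.symm) (fun h => G.loopless.irrefl c h)
  -- the graph is bipartite with parts {a,b,c} and the rest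
  set f : Fin 7 → Bool := fun v => decide (v = a ∨ v = b ∨ v = c) with hf
  have hcross : ∀ ⦃x y : Fin 7⦄, G.Adj x y → f x ≠ f y := by
    intro x y hadj
    have hax : ∀ z : Fin 7, ¬(z = a ∨ z = b ∨ z = c) → G.Adj a z := by
      intro z hz
      rw [← SimpleGraph.mem_neighborFinset, hNa]
      simp only [Finset.mem_sdiff, Finset.mem_univ, true_and, Finset.mem_insert,
        Finset.mem_singleton]
      tauto
    simp only [hf, ne_eq, decide_eq_decide]
    intro hiff
    by_cases hx : x = a ∨ x = b ∨ x = c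
    · have hy : y = a ∨ y = b ∨ y = c := hiff.mp hx
      rcases hx with rfl | rfl | rfl <;> rcases hy with rfl | rfl | rfl <;>
        first
          | exact G.loopless.irrefl _ hadj
          | exact hnab hadj | exact hnab hadj.symm
          | exact hnac hadj | exact hnac hadj.symm
          | exact hnbc hadj | exact hnbc hadj.symm
    · have hy : ¬(y = a ∨ y = b ∨ y = c) := fun h => hx (hiff.mpr h)
      exact htri a x y (hax x hx) (hax y hy) hadj
  rintro ⟨v, w, hcyc, hlen⟩
  have := (walk_parity f hcross w).mp rfl
  rw [hlen] at this
  exact (by decide : ¬ Even 5) this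
end

section
/- There is no proper edge coloring of the complete bipartite graph K_{3,4} with 4 colors {1,2,3,4} such that no 4-cycle of K_{3,4} has two of its edges colored 1 and at least one edge colored 2. -/
open SimpleGraph

/-- There is no proper edge coloring of `K_{3,4}` with colors {1,2,3,4} such that
no 4-cycle has two edges colored 1 and at least one edge colored 2.
Here `c i j` is the color of the edge `uᵢvⱼ`. -/
theorem no_restricted_coloring_K34 :
    ¬ ∃ c : Fin 3 → Fin 4 → ℕ,
      (∀ i j, c i j ∈ ({1, 2, 3, 4} : Finset ℕ)) ∧
      (∀ i, Function.Injective (c i)) ∧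
      (∀ j, Function.Injective fun i => c i j) ∧
      (∀ i l, i ≠ l → ∀ j k, j ≠ k →
        ¬ (2 ≤ [c i j, c i k, c l j, c l k].count 1 ∧
            2 ∈ [c i j, c i k, c l j, c l k])) := by
  rintro ⟨c, hmem, hrow, hcol, hcyc⟩
  -- each row attains each color in {1,2,3,4}
  have hsurj : ∀ i : Fin 3, ∀ v ∈ ({1,2,3,4} : Finset ℕ), ∃ j, c i j = v := by
    intro i v hv
    have himg : (Finset.univ.image (c i)) = {1,2,3,4} := by
      apply Finset.eq_of_subset_of_card_le
      · intro x hx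
        simp only [Finset.mem_image, Finset.mem_univ, true_and] at hx
        obtain ⟨j, rfl⟩ := hx; exact hmem i j
      · rw [Finset.card_image_of_injective _ (hrow i)]; simp
    have hv2 : v ∈ Finset.univ.image (c i) := himg ▸ hv
    simpa using hv2
  choose j hj using fun i => hsurj i 1 (by decide)
  choose k hk using fun i => hsurj i 2 (by decide)
  have hjinj : Function.Injective j := by
    intro a b hab
    exact hcol (j a) (show c a (j a) = c b (j a) by rw [hj a, hab, hj b])
  have hkj : ∀ i l, k i ≠ j l := by
    intro i l hkl
    by_cases hil : i = l
    · subst hil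
      have : (2 : ℕ) = 1 := by rw [← hk i, hkl, hj i]
      exact absurd this (by decide)
    · have hjne : j i ≠ j l := fun h => hil (hjinj h)
      have e1 : c i (j i) = 1 := hj i
      have e2 : c i (j l) = 2 := by rw [← hkl]; exact hk i
      have e4 : c l (j l) = 1 := hj l
      refine hcyc i l hil (j i) (j l) hjne ⟨?_, ?_⟩
      · rw [e1, e2, e4]
        by_cases h : c l (j i) = 1 <;> simp [List.count_cons, h]
      · rw [e2]; simp
  have hk01 : k 0 = k 1 := by
    have key : ∀ (j k : Fin 3 → Fin 4), Function.Injective j →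
        (∀ i l, k i ≠ j l) → k 0 = k 1 := by
      set_option maxRecDepth 10000 in decide
    exact key j k hjinj hkj
  have : (0 : Fin 3) = 1 := hcol (k 0) (show c 0 (k 0) = c 1 (k 0) by
    rw [hk 0, hk01, hk 1])
  exact absurd this (by decide)
end
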